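/- Let M₁, M₂, …, M_L be D×D nonsingular integer matrices and let R be an lcrm of M₁, …, M_L. If two integer vectors m, m′ ∈ 𝒩(R) have the same remainders modulo every modulus, i.e., ⟨m⟩_{M_i} = ⟨m′⟩_{M_i} for all 1 ≤ i ≤ L, then m = m′. (Uniqueness part of the MD-CRT for integer vectors.) -/

import Mathlib

open Matrix

/-- An integer matrix is unimodular if its determinant is `1` or `-1`. -/
def Unimod {D : ℕ} (U : Matrix (Fin D) (Fin D) ℤ) : Prop := U.det = 1 ∨ U.det = -1

/-- `C` is a common right multiple (crm) of the family `M`. -/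
def IsCRM {D n : ℕ} (M : Fin n → Matrix (Fin D) (Fin D) ℤ)
    (C : Matrix (Fin D) (Fin D) ℤ) : Prop :=
  C.det ≠ 0 ∧ ∀ i, ∃ Q : Matrix (Fin D) (Fin D) ℤ, C = M i * Q

/-- `C` is a least common right multiple (lcrm) of the family `M`. -/
def IsLCRM {D n : ℕ} (M : Fin n → Matrix (Fin D) (Fin D) ℤ)
    (C : Matrix (Fin D) (Fin D) ℤ) : Prop :=
  IsCRM M C ∧ ∀ C', IsCRM M C' → ∃ P : Matrix (Fin D) (Fin D) ℤ, C' = C * P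

/-- `C` is a common left multiple (clm) of the family `M`. -/
def IsCLM {D n : ℕ} (M : Fin n → Matrix (Fin D) (Fin D) ℤ)
    (C : Matrix (Fin D) (Fin D) ℤ) : Prop :=
  C.det ≠ 0 ∧ ∀ i, ∃ Q : Matrix (Fin D) (Fin D) ℤ, C = Q * M i

/-- `C` is a least common left multiple (lclm) of the family `M`. -/
def IsLCLM {D n : ℕ} (M : Fin n → Matrix (Fin D) (Fin D) ℤ)
    (C : Matrix (Fin D) (Fin D) ℤ) : Prop :=
  IsCLM M C ∧ ∀ C', IsCLM M C' → ∃ P : Matrix (Fin D) (Fin D) ℤ, C' = P * C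

/-- `B` is a common left divisor (cld) of the family `M`. -/
def IsCLD {D n : ℕ} (M : Fin n → Matrix (Fin D) (Fin D) ℤ)
    (B : Matrix (Fin D) (Fin D) ℤ) : Prop :=
  B.det ≠ 0 ∧ ∀ i, ∃ K : Matrix (Fin D) (Fin D) ℤ, M i = B * K

/-- `B` is a greatest common left divisor (gcld) of the family `M`:
`B` is a cld, and every cld of the family is a left divisor of `B`. -/
def IsGCLD {D n : ℕ} (M : Fin n → Matrix (Fin D) (Fin D) ℤ)
    (B : Matrix (Fin D) (Fin D) ℤ) : Prop :=
  IsCLD M B ∧ ∀ B', IsCLD M B' → ∃ K : Matrix (Fin D) (Fin D) ℤ, B = B' * K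

/-- `A` and `B` are left coprime: every (nonsingular) common left divisor is unimodular. -/
def LeftCoprime {D : ℕ} (A B : Matrix (Fin D) (Fin D) ℤ) : Prop :=
  ∀ C : Matrix (Fin D) (Fin D) ℤ, C.det ≠ 0 →
    (∃ K, A = C * K) → (∃ K, B = C * K) → Unimod C

/-- `A` and `B` are right coprime: every (nonsingular) common right divisor is unimodular. -/
def RightCoprime {D : ℕ} (A B : Matrix (Fin D) (Fin D) ℤ) : Prop :=
  ∀ C : Matrix (Fin D) (Fin D) ℤ, C.det ≠ 0 →
    (∃ K, A = K * C) → (∃ K, B = K * C) → Unimod C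

/-- `A` and `B` are coprime (for commuting matrices left and right coprimeness coincide). -/
def MatCoprime {D : ℕ} (A B : Matrix (Fin D) (Fin D) ℤ) : Prop :=
  LeftCoprime A B ∧ RightCoprime A B

/-- The lattice generated by an integer matrix `M`: all integer combinations `M n`. -/
def LAT {D : ℕ} (M : Matrix (Fin D) (Fin D) ℤ) : Set (Fin D → ℤ) :=
  {v | ∃ n : Fin D → ℤ, v = M.mulVec n}

/-- `𝒩(M)`: the integer vectors of the form `M x` with `x ∈ [0,1)^D`. -/
def NSet {D : ℕ} (M : Matrix (Fin D) (Fin D) ℤ) : Set (Fin D → ℤ) :=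
  {k | ∃ x : Fin D → ℚ, (∀ j, 0 ≤ x j ∧ x j < 1) ∧
      (M.map (Int.cast : ℤ → ℚ)).mulVec x = fun j => (k j : ℚ)}

/-- `r` is the remainder of `m` modulo `M`: `r ∈ 𝒩(M)` and `m − r ∈ LAT(M)`. -/
def IsRem {D : ℕ} (M : Matrix (Fin D) (Fin D) ℤ) (m r : Fin D → ℤ) : Prop :=
  r ∈ NSet M ∧ (m - r) ∈ LAT M

/-- The Euclidean norm on `ℝ^D`. -/
noncomputable def euclNorm {D : ℕ} (v : Fin D → ℝ) : ℝ := Real.sqrt (∑ j, (v j) ^ 2)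

/-- The lattice generated by a real matrix `M`: all integer combinations `M n`. -/
def LATR {D : ℕ} (M : Matrix (Fin D) (Fin D) ℝ) : Set (Fin D → ℝ) :=
  {v | ∃ n : Fin D → ℤ, v = M.mulVec (fun j => (n j : ℝ))}


lemma my_mul_updateColumn {D : ℕ} (A B : Matrix (Fin D) (Fin D) ℤ) (c : Fin D) (w : Fin D → ℤ) :
    A * (B.updateCol c w) = (A * B).updateCol c (A.mulVec w) := by
  ext j l
  by_cases h : l = c <;> simp [mul_apply, updateCol_apply, mulVec, dotProduct, h]

lemma my_updateColumn_mulVec_single {D : ℕ} (R : Matrix (Fin D) (Fin D) ℤ) (c : Fin D)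
    (u : Fin D → ℤ) : (R.updateCol c u).mulVec (Pi.single c 1) = u := by
  ext j
  simp [mulVec, dotProduct, Pi.single_apply, updateCol_apply]

lemma my_aux1 {D' L : ℕ} (M : Fin L → Matrix (Fin (D'+1)) (Fin (D'+1)) ℤ)
    (R : Matrix (Fin (D'+1)) (Fin (D'+1)) ℤ) (hR : IsLCRM M R)
    (u : Fin (D'+1) → ℤ) (hu : ∀ i, u ∈ LAT (M i))
    (hdet : (R.updateCol 0 u).det ≠ 0) : u ∈ LAT R := by
  obtain ⟨P, hP⟩ := hR.2 (R.updateCol 0 u)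
    ⟨hdet, fun i => by
      obtain ⟨Q, hQ⟩ := hR.1.2 i
      obtain ⟨n, hn⟩ := hu i
      exact ⟨Q.updateCol 0 n, by rw [my_mul_updateColumn, ← hQ, ← hn]⟩⟩
  refine ⟨P.mulVec (Pi.single 0 1), ?_⟩
  have h := congrArg (fun A => A.mulVec (Pi.single (0 : Fin (D'+1)) (1:ℤ))) hP
  simp only [my_updateColumn_mulVec_single, ← mulVec_mulVec] at h
  exact h

lemma my_inter {D L : ℕ} (M : Fin L → Matrix (Fin D) (Fin D) ℤ)
    (R : Matrix (Fin D) (Fin D) ℤ) (hR : IsLCRM M R)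
    (v : Fin D → ℤ) (hv : ∀ i, v ∈ LAT (M i)) : v ∈ LAT R := by
  cases D with
  | zero => exact ⟨0, funext fun j => j.elim0⟩
  | succ D' =>
    by_cases hdet : (R.updateCol 0 v).det ≠ 0
    · exact my_aux1 M R hR v hv hdet
    · push_neg at hdet
      set e0 : Fin (D'+1) → ℤ := Pi.single 0 1 with he0
      have hcol : ∀ i, R.mulVec e0 ∈ LAT (M i) := fun i => by
        obtain ⟨Q, hQ⟩ := hR.1.2 i
        exact ⟨Q.mulVec e0, by rw [hQ, mulVec_mulVec]⟩
      have hmem : ∀ i, (v + R.mulVec e0) ∈ LAT (M i) := fun i => by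
        obtain ⟨a, ha⟩ := hv i
        obtain ⟨b, hb⟩ := hcol i
        exact ⟨a + b, by rw [ha, hb, mulVec_add]⟩
      have hcole : R.mulVec e0 = fun j => R j 0 := by
        ext j; simp [he0, mulVec, dotProduct, Pi.single_apply]
      have hdet2 : (R.updateCol 0 (v + R.mulVec e0)).det ≠ 0 := by
        rw [det_updateCol_add, hdet, zero_add, hcole]
        rw [show R.updateCol 0 (fun j => R j 0) = R from updateCol_eq_self R 0]
        exact hR.1.1
      obtain ⟨n, hn⟩ := my_aux1 M R hR (v + R.mulVec e0) hmem hdet2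
      exact ⟨n - e0, by rw [mulVec_sub, ← hn]; ring⟩

lemma my_final {D : ℕ} (R : Matrix (Fin D) (Fin D) ℤ) (hRdet : R.det ≠ 0)
    (m m' : Fin D → ℤ)
    (x x' : Fin D → ℚ) (hx : ∀ j, 0 ≤ x j ∧ x j < 1) (hx' : ∀ j, 0 ≤ x' j ∧ x' j < 1)
    (hxm : (R.map (Int.cast : ℤ → ℚ)).mulVec x = fun j => (m j : ℚ))
    (hxm' : (R.map (Int.cast : ℤ → ℚ)).mulVec x' = fun j => (m' j : ℚ))
    (n : Fin D → ℤ) (hn : m - m' = R.mulVec n) : m = m' := by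
  set Rq := R.map (Int.cast : ℤ → ℚ) with hRq
  have hdetq : Rq.det ≠ 0 := by
    have : Rq.det = ((R.det : ℤ) : ℚ) := by
      rw [hRq]
      exact (RingHom.map_det (Int.castRingHom ℚ) R).symm
    rw [this]
    exact_mod_cast hRdet
  have hinj : Function.Injective Rq.mulVec :=
    mulVec_injective_iff_isUnit.2 ((isUnit_iff_isUnit_det Rq).2 (isUnit_iff_ne_zero.2 hdetq))
  have key : Rq.mulVec x = Rq.mulVec (x' + fun j => (n j : ℚ)) := by
    rw [mulVec_add, hxm']
    ext j
    have h2 : ((m j : ℚ) - (m' j : ℚ)) = Rq.mulVec (fun k => (n k : ℚ)) j := by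
      have hthis : m j - m' j = ∑ k, R j k * n k := by
        simpa [mulVec, dotProduct] using congrFun hn j
      rw [hRq]
      simp only [mulVec, dotProduct, map_apply]
      exact_mod_cast hthis
    have h3 := congrFun hxm j
    simp only [Pi.add_apply] at *
    rw [h3]
    linarith [h2]
  have hxx : x = x' + fun j => (n j : ℚ) := hinj key
  have hn0 : ∀ j, n j = 0 := by
    intro j
    have h1 := (hx j).1; have h2 := (hx j).2
    have h3 := (hx' j).1; have h4 := (hx' j).2
    have := congrFun hxx j
    simp only [Pi.add_apply] at this
    have : (n j : ℚ) = x j - x' j := by linarith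
    have hlt : (n j : ℚ) < 1 := by linarith
    have hgt : (-1 : ℚ) < n j := by linarith
    exact_mod_cast by
      have : n j < 1 := by exact_mod_cast hlt
      have : -1 < n j := by exact_mod_cast hgt
      omega
  have hxeq : x = x' := by
    rw [hxx]; ext j; simp [hn0 j]
  funext j
  have : (m j : ℚ) = (m' j : ℚ) := by
    rw [← congrFun hxm j, ← congrFun hxm' j, hxeq]
  exact_mod_cast this

/-- uniqueness part of the MD-CRT — two vectors in `𝒩(R)` with the same
remainders modulo every modulus coincide. -/
theorem stmt1 {D L : ℕ} (hL : 1 ≤ L)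
    (M : Fin L → Matrix (Fin D) (Fin D) ℤ) (hM : ∀ i, (M i).det ≠ 0)
    (R : Matrix (Fin D) (Fin D) ℤ) (hR : IsLCRM M R)
    (m m' : Fin D → ℤ) (hm : m ∈ NSet R) (hm' : m' ∈ NSet R)
    (r : Fin L → Fin D → ℤ)
    (h1 : ∀ i, IsRem (M i) m (r i)) (h2 : ∀ i, IsRem (M i) m' (r i)) :
    m = m' := by
  obtain ⟨x, hx, hxm⟩ := hm
  obtain ⟨x', hx', hxm'⟩ := hm'
  have hv : ∀ i, (m - m') ∈ LAT (M i) := fun i => by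
    obtain ⟨a, ha⟩ := (h1 i).2
    obtain ⟨b, hb⟩ := (h2 i).2
    refine ⟨a - b, ?_⟩
    rw [mulVec_sub, ← ha, ← hb]
    ring
  obtain ⟨n, hn⟩ := my_inter M R hR (m - m') hv
  exact my_final R hR.1.1 m m' x x' hx hx' hxm hxm' n hn
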